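/- Let C be a finite skeletal category equipped with an epi-mono factorization system (P, Q), and let H be its hom-set matrix over ℚ, H c d = #Hom(c,d). Then det H equals the product over all objects c of C of #Aut(c). In particular det H ≠ 0 and H is invertible over ℚ. -/

import Mathlib

open CategoryTheory

section Helpers

lemma det_triangular' {n : Type*} [Fintype n] [DecidableEq n] (po : PartialOrder n)
    (M : Matrix n n ℚ) (h : ∀ i j, M i j ≠ 0 → po.le j i) :
    M.det = ∏ i, M i i := by
  letI := po
  letI : Fintype (LinearExtension n) := ‹Fintype n›
  letI : DecidableEq (LinearExtension n) := ‹DecidableEq n›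
  let e : LinearExtension n ≃ n := ⟨fun x => x, fun x => x, fun _ => rfl, fun _ => rfl⟩
  rw [← Matrix.det_submatrix_equiv_self e M, Matrix.det_of_lowerTriangular _ ?_]
  · exact e.prod_comp (fun j => M j j)
  intro i j hij
  by_contra hc
  have h2 : po.le (e j) (e i) := h _ _ hc
  have h3 : (toLinearExtension (e j) : LinearExtension n) ≤ toLinearExtension (e i) :=
    toLinearExtension.monotone h2
  exact absurd h3 (not_le.mpr hij)

variable {C : Type*} [Category C]

lemma isIso_of_epi_endo {c : C} [Finite (c ⟶ c)] (f : c ⟶ c) (hf : Epi f) : IsIso f := by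
  have hinj : Function.Injective (fun g : c ⟶ c => f ≫ g) := by
    intro g h hg
    exact (cancel_epi f).mp hg
  obtain ⟨g, hg⟩ := (Finite.injective_iff_surjective.mp hinj) (𝟙 c)
  have hg' : f ≫ g = 𝟙 c := hg
  refine ⟨g, hg', ?_⟩
  have : f ≫ g ≫ f = f ≫ 𝟙 c := by rw [← Category.assoc, hg']; simp
  exact (cancel_epi f).mp this

lemma isIso_of_mono_endo {c : C} [Finite (c ⟶ c)] (f : c ⟶ c) (hf : Mono f) : IsIso f := by
  have hinj : Function.Injective (fun g : c ⟶ c => g ≫ f) := by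
    intro g h hg
    exact (cancel_mono f).mp hg
  obtain ⟨g, hg⟩ := (Finite.injective_iff_surjective.mp hinj) (𝟙 c)
  have hg' : g ≫ f = 𝟙 c := hg
  refine ⟨g, ?_, hg'⟩
  have : (f ≫ g) ≫ f = 𝟙 c ≫ f := by rw [Category.assoc, hg']; simp
  exact (cancel_mono f).mp this

noncomputable def isoSubtypeEquivAut (c : C) : {f : c ⟶ c // IsIso f} ≃ Aut c where
  toFun f := @asIso _ _ _ _ f.1 f.2
  invFun i := ⟨i.hom, Iso.isIso_hom i⟩
  left_inv f := rfl
  right_inv i := by ext; rfl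

lemma finite_aut (c : C) [Finite (c ⟶ c)] : Finite (Aut c) :=
  Finite.of_injective (fun i : Aut c => i.hom) (fun i j h => Iso.ext h)

end Helpers

/-- For a finite skeletal category with an epi-mono factorization system `(P, Q)`, the
determinant of the hom-set matrix `H c d = #Hom(c,d)` is the product of the orders of
the automorphism groups of the objects; in particular it is non-zero and `H` is
invertible over `ℚ`. -/
theorem det_homMatrix_eq_prod_card_aut {C : Type*} [Category C] [Fintype C]
    [DecidableEq C] [∀ a b : C, Finite (a ⟶ b)] (hskel : Skeletal C)
    (P Q : MorphismProperty C)
    (hPepi : ∀ {a b : C} (f : a ⟶ b), P f → Epi f)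
    (hQmono : ∀ {a b : C} (f : a ⟶ b), Q f → Mono f)
    (hPiso : ∀ {a b : C} (f : a ⟶ b), IsIso f → P f)
    (hQiso : ∀ {a b : C} (f : a ⟶ b), IsIso f → Q f)
    (hPcomp : ∀ {a b c : C} (f : a ⟶ b) (g : b ⟶ c), P f → P g → P (f ≫ g))
    (hQcomp : ∀ {a b c : C} (f : a ⟶ b) (g : b ⟶ c), Q f → Q g → Q (f ≫ g))
    (hfact : ∀ {c d : C} (f : c ⟶ d),
      ∃ (z : C) (e : c ⟶ z) (m : z ⟶ d), P e ∧ Q m ∧ e ≫ m = f)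
    (huniq : ∀ {c d z z' : C} (e : c ⟶ z) (e' : c ⟶ z') (m : z ⟶ d) (m' : z' ⟶ d),
      P e → P e' → Q m → Q m' → e ≫ m = e' ≫ m' →
      ∃ φ : z ≅ z', e ≫ φ.hom = e' ∧ φ.hom ≫ m' = m) :
    (Matrix.of fun c d : C => (Nat.card (c ⟶ d) : ℚ)).det =
      ∏ c : C, (Nat.card (Aut c) : ℚ) ∧
    (Matrix.of fun c d : C => (Nat.card (c ⟶ d) : ℚ)).det ≠ 0 ∧
    IsUnit (Matrix.of fun c d : C => (Nat.card (c ⟶ d) : ℚ)).det := by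
  classical
  have hAutFin : ∀ z : C, Finite (Aut z) := fun z => finite_aut z
  have hAutNe : ∀ z : C, (Nat.card (Aut z) : ℚ) ≠ 0 := by
    intro z
    haveI := hAutFin z
    exact_mod_cast Nat.card_ne_zero.mpr ⟨⟨Iso.refl z⟩, hAutFin z⟩
  -- diagonal counts
  have hPdiag : ∀ z : C, Nat.card {e : z ⟶ z // P e} = Nat.card (Aut z) := by
    intro z
    exact Nat.card_congr ((Equiv.subtypeEquivRight (fun e =>
      ⟨fun h => isIso_of_epi_endo e (hPepi e h), fun h => hPiso e h⟩)).trans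
      (isoSubtypeEquivAut z))
  have hQdiag : ∀ z : C, Nat.card {m : z ⟶ z // Q m} = Nat.card (Aut z) := by
    intro z
    exact Nat.card_congr ((Equiv.subtypeEquivRight (fun m =>
      ⟨fun h => isIso_of_mono_endo m (hQmono m h), fun h => hQiso m h⟩)).trans
      (isoSubtypeEquivAut z))
  -- key counting identity
  have key : ∀ c d : C, (Nat.card (c ⟶ d) : ℚ) =
      ∑ z : C, ((Nat.card {e : c ⟶ z // P e} : ℚ) / (Nat.card (Aut z) : ℚ)) *
        (Nat.card {m : z ⟶ d // Q m} : ℚ) := by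
    intro c d
    letI : Fintype (c ⟶ d) := Fintype.ofFinite _
    set Fac : C → (c ⟶ d) → Prop :=
      fun z f => ∃ (e : c ⟶ z) (m : z ⟶ d), P e ∧ Q m ∧ e ≫ m = f with hFacDef
    have step1 : ∀ z : C,
        Nat.card {f : c ⟶ d // Fac z f} * Nat.card (Aut z) =
        (Nat.card {e : c ⟶ z // P e}) * (Nat.card {m : z ⟶ d // Q m}) := by
      intro z
      haveI := hAutFin z
      rw [← Nat.card_prod, ← Nat.card_prod]
      have hch : ∀ f : {f : c ⟶ d // Fac z f},
          ∃ (e : c ⟶ z) (m : z ⟶ d), P e ∧ Q m ∧ e ≫ m = f.1 := fun f => f.2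
      choose E0 M0 hE0 hM0 hEM0 using hch
      refine Nat.card_eq_of_bijective (fun p : {f : c ⟶ d // Fac z f} × Aut z =>
        ((⟨E0 p.1 ≫ p.2.hom, hPcomp _ _ (hE0 p.1) (hPiso _ (Iso.isIso_hom p.2))⟩ :
            {e : c ⟶ z // P e}),
         (⟨p.2.inv ≫ M0 p.1, hQcomp _ _ (hQiso _ (Iso.isIso_inv p.2)) (hM0 p.1)⟩ :
            {m : z ⟶ d // Q m}))) ⟨?_, ?_⟩
      · rintro ⟨f, φ⟩ ⟨g, ψ⟩ h
        have h1 : E0 f ≫ φ.hom = E0 g ≫ ψ.hom := congrArg (fun x => x.1.1) h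
        have h2 : φ.inv ≫ M0 f = ψ.inv ≫ M0 g := congrArg (fun x => x.2.1) h
        have hfg : f = g := by
          apply Subtype.ext
          have : (E0 f ≫ φ.hom) ≫ (φ.inv ≫ M0 f) = (E0 g ≫ ψ.hom) ≫ (ψ.inv ≫ M0 g) := by
            rw [h1, h2]
          simpa [hEM0 f, hEM0 g, Iso.hom_inv_id_assoc (φ : z ≅ z), Iso.hom_inv_id_assoc (ψ : z ≅ z)] using this
        subst hfg
        have hepi : Epi (E0 f) := hPepi _ (hE0 f)
        have : φ.hom = ψ.hom := (cancel_epi (E0 f)).mp h1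
        have : φ = ψ := Iso.ext this
        rw [this]
      · rintro ⟨⟨e, he⟩, ⟨m, hm⟩⟩
        have hf : Fac z (e ≫ m) := ⟨e, m, he, hm, rfl⟩
        set f : {f : c ⟶ d // Fac z f} := ⟨e ≫ m, hf⟩ with hfdef
        obtain ⟨φ, hφ1, hφ2⟩ :=
          huniq (E0 f) e (M0 f) m (hE0 f) he (hM0 f) hm (by rw [hEM0 f])
        refine ⟨(f, φ), ?_⟩
        ext
        · exact hφ1
        · show φ.inv ≫ M0 f = m
          rw [← hφ2, Iso.inv_hom_id_assoc]
    have huniqz : ∀ f : c ⟶ d, ∃! z : C, Fac z f := by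
      intro f
      obtain ⟨z, e, m, hPe, hQm, hc⟩ := hfact f
      refine ⟨z, ⟨e, m, hPe, hQm, hc⟩, ?_⟩
      rintro z' ⟨e', m', hPe', hQm', hc'⟩
      obtain ⟨φ, -, -⟩ := huniq e' e m' m hPe' hPe hQm' hQm (hc'.trans hc.symm)
      exact hskel ⟨φ⟩
    have step2 : ∑ z : C, Nat.card {f : c ⟶ d // Fac z f} = Nat.card (c ⟶ d) := by
      have h1 : ∀ z : C, Nat.card {f : c ⟶ d // Fac z f} =
          ∑ f : c ⟶ d, if Fac z f then 1 else 0 := by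
        intro z
        rw [Nat.card_eq_fintype_card, Fintype.card_subtype, Finset.card_filter]
      simp_rw [h1]
      rw [Finset.sum_comm]
      have h2 : ∀ f : c ⟶ d, (∑ z : C, if Fac z f then 1 else 0) = 1 := by
        intro f
        obtain ⟨z₀, hz₀, hu⟩ := huniqz f
        rw [Finset.sum_eq_single z₀]
        · simp [hz₀]
        · intro b _ hb
          simp only [ite_eq_right_iff]
          intro hb'
          exact absurd (hu b hb') hb
        · intro h; exact absurd (Finset.mem_univ z₀) h
      simp_rw [h2]
      rw [Nat.card_eq_fintype_card, Fintype.card, Finset.card_eq_sum_ones]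
    have step1' : ∀ z : C, ((Nat.card {e : c ⟶ z // P e} : ℚ) / (Nat.card (Aut z) : ℚ)) *
        (Nat.card {m : z ⟶ d // Q m} : ℚ) = (Nat.card {f : c ⟶ d // Fac z f} : ℚ) := by
      intro z
      have h2 : (Nat.card {f : c ⟶ d // Fac z f} : ℚ) * (Nat.card (Aut z) : ℚ) =
          (Nat.card {e : c ⟶ z // P e} : ℚ) * (Nat.card {m : z ⟶ d // Q m} : ℚ) := by
        exact_mod_cast congrArg (fun n : ℕ => (n : ℚ)) (step1 z)
      rw [div_mul_eq_mul_div, div_eq_iff (hAutNe z)]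
      exact h2.symm
    calc (Nat.card (c ⟶ d) : ℚ)
        = ∑ z : C, (Nat.card {f : c ⟶ d // Fac z f} : ℚ) := by exact_mod_cast step2.symm
      _ = _ := Finset.sum_congr rfl fun z _ => (step1' z).symm
  -- the two matrices
  set Ep : Matrix C C ℚ :=
    Matrix.of (fun c z : C => (Nat.card {e : c ⟶ z // P e} : ℚ) / (Nat.card (Aut z) : ℚ))
    with hEpDef
  set Mq : Matrix C C ℚ :=
    Matrix.of (fun z d : C => (Nat.card {m : z ⟶ d // Q m} : ℚ)) with hMqDef
  have hprod : (Matrix.of fun c d : C => (Nat.card (c ⟶ d) : ℚ)) = Ep * Mq := by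
    ext c d
    rw [Matrix.mul_apply]
    simpa [hEpDef, hMqDef] using key c d
  -- partial orders
  let poP : PartialOrder C :=
  { le := fun a b => Nonempty {e : b ⟶ a // P e}
    lt := fun a b => Nonempty {e : b ⟶ a // P e} ∧ ¬ Nonempty {e : a ⟶ b // P e}
    lt_iff_le_not_ge := fun _ _ => Iff.rfl
    le_refl := fun a => ⟨⟨𝟙 a, hPiso _ inferInstance⟩⟩
    le_trans := by
      rintro a b c ⟨⟨e, he⟩⟩ ⟨⟨e', he'⟩⟩
      exact ⟨⟨e' ≫ e, hPcomp _ _ he' he⟩⟩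
    le_antisymm := by
      rintro a b ⟨⟨e, he⟩⟩ ⟨⟨e', he'⟩⟩
      -- e : b ⟶ a, e' : a ⟶ b, both in P hence epi
      have hee : Epi e := hPepi _ he
      have hee' : Epi e' := hPepi _ he'
      have h1 : IsIso (e' ≫ e) := isIso_of_epi_endo _ (epi_comp _ _)
      have hsplit : e' ≫ (e ≫ inv (e' ≫ e)) = 𝟙 a := by
        rw [← Category.assoc]; exact IsIso.hom_inv_id (e' ≫ e)
      have h2 : (e ≫ inv (e' ≫ e)) ≫ e' = 𝟙 b := by
        have : e' ≫ (e ≫ inv (e' ≫ e)) ≫ e' = e' ≫ 𝟙 b := by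
          rw [← Category.assoc, hsplit]; simp
        exact (cancel_epi e').mp this
      have : IsIso e' := ⟨e ≫ inv (e' ≫ e), hsplit, h2⟩
      exact hskel ⟨asIso e'⟩ }
  let poQ : PartialOrder C :=
  { le := fun a b => Nonempty {m : b ⟶ a // Q m}
    lt := fun a b => Nonempty {m : b ⟶ a // Q m} ∧ ¬ Nonempty {m : a ⟶ b // Q m}
    lt_iff_le_not_ge := fun _ _ => Iff.rfl
    le_refl := fun a => ⟨⟨𝟙 a, hQiso _ inferInstance⟩⟩
    le_trans := by
      rintro a b c ⟨⟨m, hm⟩⟩ ⟨⟨m', hm'⟩⟩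
      exact ⟨⟨m' ≫ m, hQcomp _ _ hm' hm⟩⟩
    le_antisymm := by
      rintro a b ⟨⟨m, hm⟩⟩ ⟨⟨m', hm'⟩⟩
      -- m : b ⟶ a, m' : a ⟶ b, both in Q hence mono
      have hmm : Mono m := hQmono _ hm
      have hmm' : Mono m' := hQmono _ hm'
      have h1 : IsIso (m ≫ m') := isIso_of_mono_endo _ (mono_comp _ _)
      have hsplit : (inv (m ≫ m') ≫ m) ≫ m' = 𝟙 b := by
        rw [Category.assoc]; exact IsIso.inv_hom_id (m ≫ m')
      have h2 : m' ≫ (inv (m ≫ m') ≫ m) = 𝟙 a := by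
        have : (m' ≫ inv (m ≫ m') ≫ m) ≫ m' = (𝟙 a) ≫ m' := by simp
        exact (cancel_mono m').mp this
      have : IsIso m' := ⟨inv (m ≫ m') ≫ m, h2, hsplit⟩
      exact hskel ⟨asIso m'⟩ }
  -- determinants
  have hdetEp : Ep.det = 1 := by
    rw [det_triangular' poP Ep (by
      intro i j hne
      have : (Nat.card {e : i ⟶ j // P e} : ℚ) ≠ 0 := by
        intro h0
        apply hne
        simp [hEpDef, h0]
      have : Nat.card {e : i ⟶ j // P e} ≠ 0 := by exact_mod_cast this
      exact (Nat.card_ne_zero.mp this).1)]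
    refine Finset.prod_eq_one fun i _ => ?_
    simp [hEpDef, hPdiag i, div_self (hAutNe i)]
  have hdetMq : Mq.det = ∏ z : C, (Nat.card (Aut z) : ℚ) := by
    rw [det_triangular' poQ Mq (by
      intro i j hne
      have : (Nat.card {m : i ⟶ j // Q m} : ℚ) ≠ 0 := by
        intro h0
        apply hne
        simp [hMqDef, h0]
      have : Nat.card {m : i ⟶ j // Q m} ≠ 0 := by exact_mod_cast this
      exact (Nat.card_ne_zero.mp this).1)]
    exact Finset.prod_congr rfl fun z _ => by simp [hMqDef, hQdiag z]
  have hdet : (Matrix.of fun c d : C => (Nat.card (c ⟶ d) : ℚ)).det =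
      ∏ c : C, (Nat.card (Aut c) : ℚ) := by
    rw [hprod, Matrix.det_mul, hdetEp, hdetMq, one_mul]
  have hne : (Matrix.of fun c d : C => (Nat.card (c ⟶ d) : ℚ)).det ≠ 0 := by
    rw [hdet]
    exact Finset.prod_ne_zero_iff.mpr fun z _ => hAutNe z
  exact ⟨hdet, hne, isUnit_iff_ne_zero.mpr hne⟩
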